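/- Let A be a real n×n matrix that is invertible and has an algebraically simple eigenvalue iω with ω > 0, with right eigenvector q ∈ ℂⁿ and left eigenvector p ∈ ℂⁿ (A*p = −iω p) normalized so p*q = 1. Let J₁ be a real n×2 matrix, v ∈ ℝ², let A₁ : ℂⁿ × ℝ² → ℂⁿ and B : ℂⁿ × ℂⁿ → ℂⁿ be bilinear maps. Then the pair of equations A h₀₀ = −J₁ v and (A − iω Iₙ) h₁₀ = γ q − A₁(q, v) − B(q, h₀₀) has a solution (h₀₀, h₁₀, γ) ∈ ℝⁿ × ℂⁿ × ℂ, with h₀₀ uniquely determined as h₀₀ = −A⁻¹J₁v, and the solvability of the second equation holds if and only if γ = p*(A₁(q, v) + B(q, −A⁻¹J₁v)). -/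

import Mathlib

open Matrix Polynomial Module

lemma charpoly_shift {m : ℕ} (M : Matrix (Fin m) (Fin m) ℂ) (μ : ℂ) :
    (M - μ • (1 : Matrix (Fin m) (Fin m) ℂ)).charpoly = M.charpoly.comp (X + C μ) := by
  have key : charmatrix (M - μ • (1 : Matrix (Fin m) (Fin m) ℂ))
      = (charmatrix M).map (aeval (X + C μ) : ℂ[X] →ₐ[ℂ] ℂ[X]) := by
    ext i j
    by_cases h : i = j
    · subst h
      simp [charmatrix_apply_eq, Matrix.sub_apply, Matrix.smul_apply, Matrix.one_apply_eq,
        map_sub, aeval_X, aeval_C]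
      ring
    · simp [charmatrix_apply_ne _ _ _ h, Matrix.sub_apply, Matrix.smul_apply,
        Matrix.one_apply_ne h, aeval_C]
  rw [Matrix.charpoly, key, Polynomial.comp_eq_aeval, Matrix.charpoly]
  exact (AlgHom.map_det (aeval (X + C μ) : ℂ[X] →ₐ[ℂ] ℂ[X]) _).symm

lemma fredholm {m : ℕ} (Mc : Matrix (Fin m) (Fin m) ℂ) (μ : ℂ)
    (hsimple : Mc.charpoly.rootMultiplicity μ = 1)
    (q p : Fin m → ℂ) (hq : Mc.mulVec q = μ • q) (hq0 : q ≠ 0)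
    (hp : Mcᴴ.mulVec p = (starRingEnd ℂ μ) • p)
    (hpq : star p ⬝ᵥ q = 1) (b : Fin m → ℂ) :
    (∃ x, (Mc - μ • (1 : Matrix (Fin m) (Fin m) ℂ)).mulVec x = b) ↔ star p ⬝ᵥ b = 0 := by
  set N := Mc - μ • (1 : Matrix (Fin m) (Fin m) ℂ) with hN
  set φ : Module.End ℂ (Fin m → ℂ) := Matrix.toLin' N with hφ
  have hφapp : ∀ x, φ x = N.mulVec x := fun x => Matrix.toLin'_apply N x
  -- q in kernel
  have hqker : q ∈ LinearMap.ker φ := by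
    rw [LinearMap.mem_ker, hφapp, hN, Matrix.sub_mulVec, hq, Matrix.smul_mulVec,
      Matrix.one_mulVec, sub_self]
  -- finrank of max gen eigenspace is 1
  have hmge : finrank ℂ (φ.maxGenEigenspace 0) = 1 := by
    have h1 : φ.charpoly = N.charpoly := by
      rw [← LinearMap.charpoly_toMatrix φ (Pi.basisFun ℂ (Fin m)),
        LinearMap.toMatrix_eq_toMatrix', hφ, LinearMap.toMatrix'_toLin']
    rw [LinearMap.finrank_maxGenEigenspace_zero_eq, h1, hN, charpoly_shift,
      ← rootMultiplicity_eq_natTrailingDegree, hsimple]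
  -- span q = maxGenEigenspace
  have hqmge : q ∈ φ.maxGenEigenspace 0 := by
    rw [Module.End.mem_maxGenEigenspace]
    exact ⟨1, by simpa [LinearMap.mem_ker] using hqker⟩
  have hspan : Submodule.span ℂ {q} = φ.maxGenEigenspace 0 := by
    apply Submodule.eq_of_le_of_finrank_eq
    · rwa [Submodule.span_singleton_le_iff_mem]
    · rw [finrank_span_singleton hq0, hmge]
  have hker : LinearMap.ker φ = Submodule.span ℂ {q} := by
    apply le_antisymm
    · rw [hspan]
      intro x hx
      rw [Module.End.mem_maxGenEigenspace]
      exact ⟨1, by simpa using hx⟩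
    · rwa [Submodule.span_singleton_le_iff_mem]
  have hkerrank : finrank ℂ (LinearMap.ker φ) = 1 := by
    rw [hker, finrank_span_singleton hq0]
  -- the functional
  set ℓ : (Fin m → ℂ) →ₗ[ℂ] ℂ :=
    { toFun := fun x => star p ⬝ᵥ x
      map_add' := fun x y => dotProduct_add _ x y
      map_smul' := fun c x => by simp [dotProduct_smul] } with hℓ
  have hℓapp : ∀ x, ℓ x = star p ⬝ᵥ x := fun _ => rfl
  have hℓq : ℓ q = 1 := hpq
  -- range φ ≤ ker ℓ
  have hle : LinearMap.range φ ≤ LinearMap.ker ℓ := by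
    rintro _ ⟨x, rfl⟩
    rw [LinearMap.mem_ker, hℓapp, hφapp, dotProduct_mulVec]
    have hvM : vecMul (star p) N = 0 := by
      have : Nᴴ.mulVec p = 0 := by
        rw [hN, conjTranspose_sub, Matrix.sub_mulVec, hp]
        simp [Matrix.smul_mulVec, Matrix.one_mulVec]
      calc vecMul (star p) N = star (Nᴴ.mulVec p) := by
            rw [Matrix.star_mulVec, conjTranspose_conjTranspose]
        _ = 0 := by rw [this]; simp
    rw [hvM, zero_dotProduct]
  -- finranks
  have hrn1 : finrank ℂ (LinearMap.range φ) + 1 = m := by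
    have := LinearMap.finrank_range_add_finrank_ker φ
    rw [hkerrank] at this
    simpa using this
  have hℓrange : LinearMap.range ℓ = ⊤ := by
    rw [LinearMap.range_eq_top]
    intro c
    exact ⟨c • q, by rw [LinearMap.map_smul, hℓq, smul_eq_mul, mul_one]⟩
  have hrn2 : finrank ℂ (LinearMap.ker ℓ) + 1 = m := by
    have := LinearMap.finrank_range_add_finrank_ker ℓ
    rw [hℓrange, finrank_top, finrank_self] at this
    simpa [add_comm] using this
  have heq : LinearMap.range φ = LinearMap.ker ℓ :=
    Submodule.eq_of_le_of_finrank_eq hle (by omega)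
  constructor
  · rintro ⟨x, hx⟩
    have : b ∈ LinearMap.range φ := ⟨x, by rw [hφapp, hx]⟩
    rw [heq] at this
    exact this
  · intro hb
    have : b ∈ LinearMap.range φ := by rw [heq]; exact hb
    obtain ⟨x, hx⟩ := this
    exact ⟨x, by rw [← hφapp, hx]⟩


/-- First-order (in parameters) equations of the homological equation at a generalized
Hopf point: `A h₀₀ = -J₁ v` has the unique solution `h₀₀ = -A⁻¹J₁v`, and
`(A - iω I) h₁₀ = γ q - A₁(q,v) - B(q,h₀₀)` is solvable iff
`γ = p*(A₁(q,v) + B(q, -A⁻¹J₁v))`. -/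
theorem generalized_hopf_parameter_equations
    {n : ℕ} (A : Matrix (Fin n) (Fin n) ℝ) (hA : IsUnit A.det)
    (ω : ℝ) (hω : 0 < ω)
    (hsimple : (A.map Complex.ofReal).charpoly.rootMultiplicity (Complex.I * ω) = 1)
    (q p : Fin n → ℂ)
    (hq : (A.map Complex.ofReal).mulVec q = (Complex.I * ω) • q) (hq0 : q ≠ 0)
    (hp : (A.map Complex.ofReal)ᴴ.mulVec p = (-(Complex.I * ω)) • p)
    (hpq : star p ⬝ᵥ q = 1)
    (J₁ : Matrix (Fin n) (Fin 2) ℝ) (v : Fin 2 → ℝ)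
    (A₁ : (Fin n → ℂ) →ₗ[ℝ] (Fin 2 → ℝ) →ₗ[ℝ] (Fin n → ℂ))
    (B : (Fin n → ℂ) →ₗ[ℂ] (Fin n → ℂ) →ₗ[ℂ] (Fin n → ℂ)) :
    let h₀₀ : Fin n → ℝ := -(A⁻¹.mulVec (J₁.mulVec v))
    let h₀₀c : Fin n → ℂ := fun i => (h₀₀ i : ℂ)
    -- h₀₀ solves the first equation
    (A.mulVec h₀₀ = -(J₁.mulVec v)) ∧
    -- and it is the unique solution
    (∀ h : Fin n → ℝ, A.mulVec h = -(J₁.mulVec v) → h = h₀₀) ∧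
    -- the pair of equations has a solution (h₀₀, h₁₀, γ)
    (∃ (γ : ℂ) (h₁₀ : Fin n → ℂ),
      (A.map Complex.ofReal - (Complex.I * ω) • (1 : Matrix (Fin n) (Fin n) ℂ)).mulVec h₁₀
        = γ • q - A₁ q v - B q h₀₀c) ∧
    -- solvability of the second equation holds iff γ = p*(A₁(q,v) + B(q, -A⁻¹J₁v))
    (∀ γ : ℂ,
      (∃ h₁₀ : Fin n → ℂ,
        (A.map Complex.ofReal - (Complex.I * ω) • (1 : Matrix (Fin n) (Fin n) ℂ)).mulVec h₁₀
          = γ • q - A₁ q v - B q h₀₀c) ↔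
      γ = star p ⬝ᵥ (A₁ q v + B q h₀₀c)) := by
  intro h₀₀ h₀₀c
  have hAinv : ∀ y : Fin n → ℝ, A.mulVec (A⁻¹.mulVec y) = y := by
    intro y
    rw [Matrix.mulVec_mulVec, Matrix.mul_nonsing_inv A hA, Matrix.one_mulVec]
  have hp' : (A.map Complex.ofReal)ᴴ.mulVec p
      = (starRingEnd ℂ (Complex.I * ω)) • p := by
    rw [hp]
    congr 1
    simp [Complex.ext_iff]
  have key : ∀ γ : ℂ,
      (∃ h₁₀ : Fin n → ℂ,
        (A.map Complex.ofReal - (Complex.I * ω) • (1 : Matrix (Fin n) (Fin n) ℂ)).mulVec h₁₀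
          = γ • q - A₁ q v - B q h₀₀c) ↔
      γ = star p ⬝ᵥ (A₁ q v + B q h₀₀c) := by
    intro γ
    rw [fredholm (A.map Complex.ofReal) (Complex.I * ω) hsimple q p hq hq0 hp' hpq]
    have : star p ⬝ᵥ (γ • q - A₁ q v - B q h₀₀c)
        = γ - star p ⬝ᵥ (A₁ q v + B q h₀₀c) := by
      simp [dotProduct_sub, dotProduct_smul, dotProduct_add, hpq]
      ring
    rw [this, sub_eq_zero]
  refine ⟨?_, ?_, ?_, key⟩
  · show A.mulVec (-(A⁻¹.mulVec (J₁.mulVec v))) = -(J₁.mulVec v)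
    rw [Matrix.mulVec_neg, hAinv]
  · intro h hh
    have : A⁻¹.mulVec (A.mulVec h) = A⁻¹.mulVec (-(J₁.mulVec v)) := by rw [hh]
    rw [Matrix.mulVec_mulVec, Matrix.nonsing_inv_mul A hA, Matrix.one_mulVec,
      Matrix.mulVec_neg] at this
    exact this
  · exact ⟨star p ⬝ᵥ (A₁ q v + B q h₀₀c), (key _).mpr rfl⟩
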